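/- If the trace function β satisfies Condition 1 (with β = 1 on length-0 trajectories), then for every trajectory F_t one has β(F_t) ≤ ∏_{k=1}^t ρ_k; consequently every matrix B_t is entrywise nonnegative with row sums B_t 𝟙 ≤ 𝟙, and the matrix C := Σ_{t=0}^∞ γ^t B_t is well defined with maximum absolute row-sum norm ‖C‖ ≤ 1/(1−γ). -/

import Mathlib

open scoped BigOperators

/-- `P` is a transition function: `P s a` is a probability distribution on next states. -/
def IsTransition {S A : Type} [Fintype S] (P : S → A → S → ℝ) : Prop :=
  (∀ s a s', 0 ≤ P s a s') ∧ ∀ s a, ∑ s', P s a s' = 1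

/-- `π` is a policy: `π s` is a probability distribution on actions. -/
def IsPolicy {S A : Type} [Fintype A] (π : S → A → ℝ) : Prop :=
  (∀ s a, 0 ≤ π s a) ∧ ∀ s, ∑ a, π s a = 1

/-- A behavior policy assigns positive probability to every action in every state. -/
def IsBehavior {S A : Type} [Fintype A] (μ : S → A → ℝ) : Prop :=
  IsPolicy μ ∧ ∀ s a, 0 < μ s a

/-- The policy matrix `P_π((s,a),(s',a')) = P(s'|s,a)·π(a'|s')`. -/
def polMat {S A : Type} (P : S → A → S → ℝ) (π : S → A → ℝ) :
    Matrix (S × A) (S × A) ℝ :=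
  fun x y => P x.1 x.2 y.1 * π y.1 y.2

/-- The importance-sampling ratio `ρ(s,a) = π(a|s) / μ(a|s)`. -/
noncomputable def isRatio {S A : Type} (π μ : S → A → ℝ) (x : S × A) : ℝ :=
  π x.1 x.2 / μ x.1 x.2

/-- Probability under behavior policy `μ` of a length-`t` trajectory
`F = ((S_0,A_0),…,(S_t,A_t))`:  `∏_{k=1}^t P(S_k|S_{k-1},A_{k-1})·μ(A_k|S_k)`. -/
def prMu {S A : Type} (P : S → A → S → ℝ) (μ : S → A → ℝ) {t : ℕ}
    (F : Fin (t + 1) → S × A) : ℝ :=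
  ∏ k : Fin t,
    (P (F k.castSucc).1 (F k.castSucc).2 (F k.succ).1 * μ (F k.succ).1 (F k.succ).2)

/-- A trace function: a nonnegative weight for every finite trajectory,
equal to `1` on length-0 trajectories. -/
def IsTrace {S A : Type} (β : (t : ℕ) → (Fin (t + 1) → S × A) → ℝ) : Prop :=
  (∀ t F, 0 ≤ β t F) ∧ ∀ F : Fin 1 → S × A, β 0 F = 1

/-- Condition 1: `β(F_t) ≤ β(F_{t-1})·ρ_t` for every `t ≥ 1` and every trajectory `F_t`,
where `F_{t-1}` is the length-`(t-1)` prefix. -/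
def Cond1 {S A : Type} (π μ : S → A → ℝ)
    (β : (t : ℕ) → (Fin (t + 1) → S × A) → ℝ) : Prop :=
  ∀ (t : ℕ) (F : Fin (t + 2) → S × A),
    β (t + 1) F ≤ β t (fun k => F k.castSucc) * isRatio π μ (F (Fin.last (t + 1)))

/-- The matrix `B_t((s,a),(s',a')) = Σ_{F_t from (s,a) ending at (s',a')} Pr_μ(F_t)·β(F_t)`. -/
noncomputable def Bmat {S A : Type} [Fintype S] [Fintype A] [DecidableEq S] [DecidableEq A]
    (P : S → A → S → ℝ) (μ : S → A → ℝ)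
    (β : (t : ℕ) → (Fin (t + 1) → S × A) → ℝ) (t : ℕ) :
    Matrix (S × A) (S × A) ℝ :=
  fun x y => ∑ F : Fin (t + 1) → S × A,
    if F 0 = x ∧ F (Fin.last t) = y then prMu P μ F * β t F else 0

/-- The Bellman operator `T_π Q = R + γ P_π Q`. -/
noncomputable def Tpi {S A : Type} [Fintype S] [Fintype A]
    (P : S → A → S → ℝ) (R : S × A → ℝ) (π : S → A → ℝ) (γ : ℝ)
    (Q : S × A → ℝ) : S × A → ℝ :=
  fun x => R x + γ * (polMat P π).mulVec Q x

/-- The Bellman optimality operator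
`(T Q)(s,a) = R(s,a) + γ Σ_{s'} P(s'|s,a) max_{a'} Q(s',a')`. -/
noncomputable def Topt {S A : Type} [Fintype S] [Fintype A] [Nonempty A]
    (P : S → A → S → ℝ) (R : S × A → ℝ) (γ : ℝ) (Q : S × A → ℝ) : S × A → ℝ :=
  fun x => R x + γ * ∑ s', P x.1 x.2 s' * ⨆ a', Q (s', a')

/-- The operator `M Q = Q + Σ_{t=0}^∞ γ^t B_t (T_π Q − Q)`. -/
noncomputable def Mop {S A : Type} [Fintype S] [Fintype A] [DecidableEq S] [DecidableEq A]
    (P : S → A → S → ℝ) (R : S × A → ℝ) (π μ : S → A → ℝ)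
    (β : (t : ℕ) → (Fin (t + 1) → S × A) → ℝ) (γ : ℝ)
    (Q : S × A → ℝ) : S × A → ℝ :=
  fun x => Q x + ∑' t : ℕ,
    γ ^ t * (Bmat P μ β t).mulVec (fun y => Tpi P R π γ Q y - Q y) x

/-- The matrix `Z = Σ_{t=1}^∞ γ^t (B_{t−1} P_π − B_t)`. -/
noncomputable def Zmat {S A : Type} [Fintype S] [Fintype A] [DecidableEq S] [DecidableEq A]
    (P : S → A → S → ℝ) (π μ : S → A → ℝ)
    (β : (t : ℕ) → (Fin (t + 1) → S × A) → ℝ) (γ : ℝ) :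
    Matrix (S × A) (S × A) ℝ :=
  fun x y => ∑' t : ℕ,
    γ ^ (t + 1) * ((Bmat P μ β t * polMat P π - Bmat P μ β (t + 1)) x y)

/-- The matrix `C = Σ_{t=0}^∞ γ^t B_t`. -/
noncomputable def Cmat {S A : Type} [Fintype S] [Fintype A] [DecidableEq S] [DecidableEq A]
    (P : S → A → S → ℝ) (μ : S → A → ℝ)
    (β : (t : ℕ) → (Fin (t + 1) → S × A) → ℝ) (γ : ℝ) :
    Matrix (S × A) (S × A) ℝ :=
  fun x y => ∑' t : ℕ, γ ^ t * Bmat P μ β t x y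

/-- The operator `M Q = Q + C (T_π Q − Q)` with `C = Σ_t γ^t B_t`. -/
noncomputable def MopC {S A : Type} [Fintype S] [Fintype A] [DecidableEq S] [DecidableEq A]
    (P : S → A → S → ℝ) (R : S × A → ℝ) (π μ : S → A → ℝ)
    (β : (t : ℕ) → (Fin (t + 1) → S × A) → ℝ) (γ : ℝ)
    (Q : S × A → ℝ) : S × A → ℝ :=
  fun x => Q x + (Cmat P μ β γ).mulVec (fun y => Tpi P R π γ Q y - Q y) x


private lemma snoc_sum' {X : Type} [Fintype X] {t : ℕ} (g : (Fin (t + 2) → X) → ℝ) :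
    ∑ F : Fin (t + 2) → X, g F = ∑ G : Fin (t + 1) → X, ∑ y : X, g (Fin.snoc G y) := by
  have h : ∑ p : (Fin (t + 1) → X) × X, g (Fin.snoc p.1 p.2) = ∑ F, g F := by
    apply Fintype.sum_equiv ((Equiv.prodComm _ _).trans
      (Fin.insertNthEquiv (fun _ => X) (Fin.last (t + 1))))
    intro p
    simp [Fin.insertNthEquiv, Fin.insertNth_last']
  rw [← h, Fintype.sum_prod_type]

private lemma sum_f_one' {S A : Type} [Fintype S] [Fintype A]
    (P : S → A → S → ℝ) (π : S → A → ℝ) (hP : IsTransition P) (hπ : IsPolicy π) (z : S × A) :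
    ∑ y : S × A, P z.1 z.2 y.1 * π y.1 y.2 = 1 := by
  rw [Fintype.sum_prod_type]
  simp only [← Finset.mul_sum]
  simp [hπ.2, hP.2]

private lemma wsum_one' {S A : Type} [Fintype S] [Fintype A] [DecidableEq S] [DecidableEq A]
    (P : S → A → S → ℝ) (π : S → A → ℝ) (hP : IsTransition P) (hπ : IsPolicy π) :
    ∀ (t : ℕ) (x : S × A),
    (∑ F : Fin (t + 1) → S × A, if F 0 = x then
      ∏ k : Fin t, P (F k.castSucc).1 (F k.castSucc).2 (F k.succ).1
        * π (F k.succ).1 (F k.succ).2 else 0) = 1 := by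
  intro t
  induction t with
  | zero =>
    intro x
    rw [← (Equiv.funUnique (Fin 1) (S × A)).symm.sum_comp]
    simp
  | succ t ih =>
    intro x
    rw [snoc_sum']
    have key : ∀ G : Fin (t + 1) → S × A, (∑ y : S × A,
        if (Fin.snoc G y : Fin (t+2) → S × A) 0 = x then
          ∏ k : Fin (t+1), P ((Fin.snoc G y : Fin (t+2) → S × A) k.castSucc).1
            ((Fin.snoc G y : Fin (t+2) → S × A) k.castSucc).2
            ((Fin.snoc G y : Fin (t+2) → S × A) k.succ).1
            * π ((Fin.snoc G y : Fin (t+2) → S × A) k.succ).1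
              ((Fin.snoc G y : Fin (t+2) → S × A) k.succ).2 else 0)
        = (if G 0 = x then
            ∏ k : Fin t, P (G k.castSucc).1 (G k.castSucc).2 (G k.succ).1
              * π (G k.succ).1 (G k.succ).2 else 0) := by
      intro G
      have h0 : ∀ y : S × A, (Fin.snoc G y : Fin (t+2) → S × A) 0 = G 0 := by
        intro y
        rw [show (0 : Fin (t+2)) = Fin.castSucc 0 by simp, Fin.snoc_castSucc]
      by_cases hG : G 0 = x
      · simp only [h0, hG, if_true]
        have hprod : ∀ y : S × A,
            (∏ k : Fin (t+1), P ((Fin.snoc G y : Fin (t+2) → S × A) k.castSucc).1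
              ((Fin.snoc G y : Fin (t+2) → S × A) k.castSucc).2
              ((Fin.snoc G y : Fin (t+2) → S × A) k.succ).1
              * π ((Fin.snoc G y : Fin (t+2) → S × A) k.succ).1
                ((Fin.snoc G y : Fin (t+2) → S × A) k.succ).2)
            = (∏ k : Fin t, P (G k.castSucc).1 (G k.castSucc).2 (G k.succ).1
              * π (G k.succ).1 (G k.succ).2)
              * (P (G (Fin.last t)).1 (G (Fin.last t)).2 y.1 * π y.1 y.2) := by
          intro y
          rw [Fin.prod_univ_castSucc]
          congr 1
          · apply Finset.prod_congr rfl
            intro k _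
            rw [Fin.succ_castSucc]; simp only [Fin.snoc_castSucc]
          · rw [Fin.snoc_castSucc, Fin.succ_last, Fin.snoc_last]
        simp only [hprod, ← Finset.mul_sum]
        rw [sum_f_one' P π hP hπ, mul_one]
      · simp [h0, hG]
    rw [Finset.sum_congr rfl (fun G _ => key G)]
    exact ih x

private lemma beta_le' {S A : Type} [Fintype S] [Fintype A]
    (π μ : S → A → ℝ) (β : (t : ℕ) → (Fin (t + 1) → S × A) → ℝ)
    (hπ : IsPolicy π) (hμ : IsBehavior μ) (hβ : IsTrace β) (hc : Cond1 π μ β) :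
    ∀ (t : ℕ) (F : Fin (t + 1) → S × A),
      β t F ≤ ∏ k : Fin t, isRatio π μ (F k.succ) := by
  intro t
  induction t with
  | zero => intro F; simp [hβ.2 F]
  | succ t ih =>
    intro F
    have hρ : 0 ≤ isRatio π μ (F (Fin.last (t + 1))) :=
      div_nonneg (hπ.1 _ _) (hμ.2 _ _).le
    calc β (t + 1) F ≤ β t (fun k => F k.castSucc) * isRatio π μ (F (Fin.last (t + 1))) :=
          hc t F
      _ ≤ (∏ k : Fin t, isRatio π μ (F k.succ.castSucc)) * isRatio π μ (F (Fin.last (t + 1))) := by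
          apply mul_le_mul_of_nonneg_right _ hρ
          have := ih (fun k => F k.castSucc)
          simpa using this
      _ = ∏ k : Fin (t + 1), isRatio π μ (F k.succ) := by
          rw [Fin.prod_univ_castSucc, Fin.succ_last]
          congr 1

private lemma prMu_nonneg' {S A : Type} [Fintype S] [Fintype A]
    (P : S → A → S → ℝ) (μ : S → A → ℝ) (hP : IsTransition P) (hμ : IsBehavior μ)
    {t : ℕ} (F : Fin (t + 1) → S × A) : 0 ≤ prMu P μ F :=
  Finset.prod_nonneg fun k _ => mul_nonneg (hP.1 _ _ _) (hμ.2 _ _).le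

private lemma Bmat_nonneg' {S A : Type} [Fintype S] [Fintype A] [DecidableEq S] [DecidableEq A]
    (P : S → A → S → ℝ) (μ : S → A → ℝ) (β : (t : ℕ) → (Fin (t + 1) → S × A) → ℝ)
    (hP : IsTransition P) (hμ : IsBehavior μ) (hβ : IsTrace β)
    (t : ℕ) (x y : S × A) : 0 ≤ Bmat P μ β t x y := by
  apply Finset.sum_nonneg
  intro F _
  split_ifs
  · exact mul_nonneg (prMu_nonneg' P μ hP hμ F) (hβ.1 t F)
  · exact le_rfl

private lemma Bmat_row' {S A : Type} [Fintype S] [Fintype A] [DecidableEq S] [DecidableEq A]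
    (P : S → A → S → ℝ) (π μ : S → A → ℝ) (β : (t : ℕ) → (Fin (t + 1) → S × A) → ℝ)
    (hP : IsTransition P) (hπ : IsPolicy π) (hμ : IsBehavior μ) (hβ : IsTrace β)
    (hc : Cond1 π μ β) (t : ℕ) (x : S × A) :
    ∑ y : S × A, Bmat P μ β t x y ≤ 1 := by
  unfold Bmat
  rw [Finset.sum_comm]
  have step1 : ∀ F : Fin (t + 1) → S × A,
      (∑ y : S × A, if F 0 = x ∧ F (Fin.last t) = y then prMu P μ F * β t F else 0)
      = if F 0 = x then prMu P μ F * β t F else 0 := by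
    intro F
    by_cases hF : F 0 = x
    · simp [hF]
    · simp [hF]
  rw [Finset.sum_congr rfl (fun F _ => step1 F)]
  rw [← wsum_one' P π hP hπ t x]
  apply Finset.sum_le_sum
  intro F _
  by_cases hF : F 0 = x
  · simp only [hF, if_true]
    calc prMu P μ F * β t F
        ≤ prMu P μ F * ∏ k : Fin t, isRatio π μ (F k.succ) :=
          mul_le_mul_of_nonneg_left (beta_le' π μ β hπ hμ hβ hc t F)
            (prMu_nonneg' P μ hP hμ F)
      _ = ∏ k : Fin t, P (F k.castSucc).1 (F k.castSucc).2 (F k.succ).1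
            * π (F k.succ).1 (F k.succ).2 := by
          rw [prMu, ← Finset.prod_mul_distrib]
          apply Finset.prod_congr rfl
          intro k _
          rw [isRatio, mul_assoc]
          congr 1
          rw [mul_comm, div_mul_cancel₀ _ (ne_of_gt (hμ.2 _ _))]
  · simp [hF]

/-- under Condition 1, `β(F_t) ≤ ∏_{k=1}^t ρ_k`; every `B_t` is entrywise
nonnegative with row sums at most 1; `C = Σ_t γ^t B_t` is well defined (entrywise summable)
with maximum absolute row-sum norm at most `1/(1−γ)`. -/
theorem stmt3 {S A : Type} [Fintype S] [Fintype A] [DecidableEq S] [DecidableEq A]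
    [Nonempty S] [Nonempty A]
    (P : S → A → S → ℝ) (π μ : S → A → ℝ) (γ : ℝ)
    (β : (t : ℕ) → (Fin (t + 1) → S × A) → ℝ)
    (hP : IsTransition P) (hπ : IsPolicy π) (hμ : IsBehavior μ) (hβ : IsTrace β)
    (hγ0 : 0 ≤ γ) (hγ1 : γ < 1)
    (hc : Cond1 π μ β) :
    (∀ (t : ℕ) (F : Fin (t + 1) → S × A),
        β t F ≤ ∏ k : Fin t, isRatio π μ (F k.succ)) ∧
    (∀ (t : ℕ) (x y : S × A), 0 ≤ Bmat P μ β t x y) ∧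
    (∀ (t : ℕ) (x : S × A), ∑ y : S × A, Bmat P μ β t x y ≤ 1) ∧
    (∀ x y : S × A, Summable fun t : ℕ => γ ^ t * Bmat P μ β t x y) ∧
    ∀ x : S × A, ∑ y : S × A, |Cmat P μ β γ x y| ≤ 1 / (1 - γ) := by
  have hbnn := Bmat_nonneg' P μ β hP hμ hβ
  have hrow := Bmat_row' P π μ β hP hπ hμ hβ hc
  have hent : ∀ (t : ℕ) (x y : S × A), Bmat P μ β t x y ≤ 1 := by
    intro t x y
    calc Bmat P μ β t x y ≤ ∑ y' : S × A, Bmat P μ β t x y' :=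
          Finset.single_le_sum (fun y' _ => hbnn t x y') (Finset.mem_univ y)
      _ ≤ 1 := hrow t x
  have hsum : ∀ x y : S × A, Summable fun t : ℕ => γ ^ t * Bmat P μ β t x y := by
    intro x y
    apply Summable.of_nonneg_of_le
      (fun t => mul_nonneg (pow_nonneg hγ0 t) (hbnn t x y))
      (fun t => by
        calc γ ^ t * Bmat P μ β t x y ≤ γ ^ t * 1 :=
              mul_le_mul_of_nonneg_left (hent t x y) (pow_nonneg hγ0 t)
          _ = γ ^ t := mul_one _)
      (summable_geometric_of_lt_one hγ0 hγ1)
  refine ⟨beta_le' π μ β hπ hμ hβ hc, hbnn, hrow, hsum, ?_⟩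
  intro x
  have hCnn : ∀ y, 0 ≤ Cmat P μ β γ x y := fun y =>
    tsum_nonneg fun t => mul_nonneg (pow_nonneg hγ0 t) (hbnn t x y)
  have h1 : ∑ y : S × A, |Cmat P μ β γ x y| = ∑ y : S × A, Cmat P μ β γ x y := by
    exact Finset.sum_congr rfl fun y _ => abs_of_nonneg (hCnn y)
  rw [h1]
  have h2 : ∑ y : S × A, Cmat P μ β γ x y
      = ∑' t : ℕ, ∑ y : S × A, γ ^ t * Bmat P μ β t x y := by
    unfold Cmat
    exact (Summable.tsum_finsetSum fun y _ => hsum x y).symm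
  rw [h2]
  have h3 : ∑' t : ℕ, (γ : ℝ) ^ t = (1 - γ)⁻¹ := tsum_geometric_of_lt_one hγ0 hγ1
  calc (∑' t : ℕ, ∑ y : S × A, γ ^ t * Bmat P μ β t x y)
      ≤ ∑' t : ℕ, γ ^ t := by
        apply Summable.tsum_le_tsum _ (summable_sum fun y _ => hsum x y)
          (summable_geometric_of_lt_one hγ0 hγ1)
        intro t
        rw [← Finset.mul_sum]
        calc γ ^ t * ∑ y : S × A, Bmat P μ β t x y ≤ γ ^ t * 1 :=
              mul_le_mul_of_nonneg_left (hrow t x) (pow_nonneg hγ0 t)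
          _ = γ ^ t := mul_one _
    _ = 1 / (1 - γ) := by rw [h3, one_div]
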